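/- Let F : ℝ⁵ → ℝ⁷ be the map F(τ_L, θ, ω, x, y) = (0, ω, g(θ, x, y) − τ_L, u₁ − R x, u₂ − R y, x, y), where g : ℝ³ → ℝ is continuously differentiable, R > 0, and u₁, u₂ are constants. Then at every point the rank of the Jacobian of F is exactly 4; in particular it is strictly less than 5, so F is nowhere an immersion. -/

import Mathlib

open Matrix ContinuousLinearMap

/-- The explicit Jacobian matrix of the steady-state/output map. -/
noncomputable def stmt15M0 (a b c R : ℝ) : Matrix (Fin 7) (Fin 5) ℝ :=
  Matrix.of ![![0,0,0,0,0], ![0,0,1,0,0], ![-1,a,0,b,c],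
    ![0,0,0,-R,0], ![0,0,0,0,-R], ![0,0,0,1,0], ![0,0,0,0,1]]

lemma stmt15_fac (a b c R : ℝ) : stmt15M0 a b c R =
    (Matrix.of ![![0,0,0,0], ![0,1,0,0], ![-1,0,b,c], ![0,0,-R,0],
      ![0,0,0,-R], ![0,0,1,0], ![0,0,0,1]] : Matrix (Fin 7) (Fin 4) ℝ) *
    (Matrix.of ![![1,-a,0,0,0], ![0,0,1,0,0], ![0,0,0,1,0], ![0,0,0,0,1]] :
      Matrix (Fin 4) (Fin 5) ℝ) := by
  rw [← Matrix.ext_iff]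
  simp [Fin.forall_fin_succ, Matrix.mul_apply, Fin.sum_univ_succ, stmt15M0]

lemma stmt15_rank_M0 (a b c R : ℝ) : (stmt15M0 a b c R).rank = 4 := by
  apply le_antisymm
  · rw [stmt15_fac a b c R]
    exact (Matrix.rank_mul_le_left _ _).trans (Matrix.rank_le_card_width _)
  · have hS : (Matrix.of ![![0,1,0,0,0,0,0], ![0,0,1,0,0,0,0], ![0,0,0,0,0,1,0],
        ![0,0,0,0,0,0,1]] : Matrix (Fin 4) (Fin 7) ℝ) *
        (stmt15M0 a b c R *
        (Matrix.of ![![1,0,0,0], ![0,0,0,0], ![0,1,0,0], ![0,0,1,0], ![0,0,0,1]] :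
          Matrix (Fin 5) (Fin 4) ℝ)) =
        (Matrix.of ![![0,1,0,0], ![-1,0,b,c], ![0,0,1,0], ![0,0,0,1]] :
          Matrix (Fin 4) (Fin 4) ℝ) := by
      rw [← Matrix.ext_iff]
      simp [Fin.forall_fin_succ, Matrix.mul_apply, Fin.sum_univ_succ, stmt15M0]
    have hunit : IsUnit (Matrix.of ![![0,1,0,0], ![-1,0,b,c], ![0,0,1,0], ![0,0,0,1]] :
        Matrix (Fin 4) (Fin 4) ℝ) := by
      rw [Matrix.isUnit_iff_isUnit_det]
      have : (Matrix.of ![![0,1,0,0], ![-1,0,b,c], ![0,0,1,0], ![0,0,0,1]] :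
          Matrix (Fin 4) (Fin 4) ℝ).det = 1 := by
        simp [Matrix.det_succ_row_zero, Fin.sum_univ_succ]
        rfl
      rw [this]; exact isUnit_one
    calc (4 : ℕ) = (Matrix.of ![![0,1,0,0], ![-1,0,b,c], ![0,0,1,0], ![0,0,0,1]] :
          Matrix (Fin 4) (Fin 4) ℝ).rank := by
          rw [Matrix.rank_of_isUnit _ hunit]; simp
      _ ≤ _ := by
          rw [← hS]
          exact (Matrix.rank_mul_le_right _ _).trans (Matrix.rank_mul_le_left _ _)

/-- the steady-state/output map of the sensorless
permanent-magnet machine,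
`F(τ_L, θ, ω, x, y) = (0, ω, g(θ,x,y) − τ_L, u₁ − Rx, u₂ − Ry, x, y)`,
has Jacobian of rank exactly 4 at every point; in particular its rank is < 5,
so F is nowhere an immersion. -/
theorem stmt15 (g : ℝ × ℝ × ℝ → ℝ) (hg : ContDiff ℝ 1 g)
    (R u₁ u₂ : ℝ) (hR : 0 < R) (X : Fin 5 → ℝ) :
    Matrix.rank (LinearMap.toMatrix'
        (fderiv ℝ (fun X : Fin 5 → ℝ =>
          (![0, X 2, g (X 1, X 3, X 4) - X 0, u₁ - R * X 3, u₂ - R * X 4, X 3, X 4] :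
            Fin 7 → ℝ)) X).toLinearMap) = 4
    ∧
    Matrix.rank (LinearMap.toMatrix'
        (fderiv ℝ (fun X : Fin 5 → ℝ =>
          (![0, X 2, g (X 1, X 3, X 4) - X 0, u₁ - R * X 3, u₂ - R * X 4, X 3, X 4] :
            Fin 7 → ℝ)) X).toLinearMap) < 5 := by
  have hgd : DifferentiableAt ℝ g (X 1, X 3, X 4) :=
    (hg.differentiable one_ne_zero).differentiableAt
  set Dg := fderiv ℝ g (X 1, X 3, X 4) with hDg
  let pr : Fin 5 → ((Fin 5 → ℝ) →L[ℝ] ℝ) := fun i => ContinuousLinearMap.proj i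
  let π : (Fin 5 → ℝ) →L[ℝ] ℝ × ℝ × ℝ := (pr 1).prod ((pr 3).prod (pr 4))
  let L' : Fin 7 → ((Fin 5 → ℝ) →L[ℝ] ℝ) :=
    ![0, pr 2, Dg.comp π - pr 0, -(R • pr 3), -(R • pr 4), pr 3, pr 4]
  have hL : HasFDerivAt (fun X : Fin 5 → ℝ =>
      (![0, X 2, g (X 1, X 3, X 4) - X 0, u₁ - R * X 3, u₂ - R * X 4, X 3, X 4] :
        Fin 7 → ℝ)) (ContinuousLinearMap.pi L') X := by
    apply hasFDerivAt_pi.2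
    intro i
    fin_cases i
    · simpa [L'] using hasFDerivAt_const (0:ℝ) X
    · simpa [L', pr] using hasFDerivAt_apply 2 X
    · show HasFDerivAt (fun X : Fin 5 → ℝ => g (X 1, X 3, X 4) - X 0) (Dg.comp π - pr 0) X
      have hπ : HasFDerivAt (fun X : Fin 5 → ℝ => (X 1, X 3, X 4)) π X :=
        HasFDerivAt.prodMk (hasFDerivAt_apply 1 X) (HasFDerivAt.prodMk (hasFDerivAt_apply 3 X) (hasFDerivAt_apply 4 X))
      exact (hgd.hasFDerivAt.comp X hπ).sub (hasFDerivAt_apply 0 X)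
    · show HasFDerivAt (fun X : Fin 5 → ℝ => u₁ - R * X 3) (-(R • pr 3)) X
      have : HasFDerivAt (fun X : Fin 5 → ℝ => R * X 3) (R • pr 3) X :=
        (hasFDerivAt_apply 3 X).const_mul R
      have h2 := (hasFDerivAt_const u₁ X).sub this
      simpa [Pi.sub_def] using h2
    · show HasFDerivAt (fun X : Fin 5 → ℝ => u₂ - R * X 4) (-(R • pr 4)) X
      have : HasFDerivAt (fun X : Fin 5 → ℝ => R * X 4) (R • pr 4) X :=
        (hasFDerivAt_apply 4 X).const_mul R
      have h2 := (hasFDerivAt_const u₂ X).sub this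
      simpa [Pi.sub_def] using h2
    · simpa [L', pr] using hasFDerivAt_apply 3 X
    · simpa [L', pr] using hasFDerivAt_apply 4 X
  have hM : LinearMap.toMatrix' (ContinuousLinearMap.pi L').toLinearMap =
      stmt15M0 (Dg (1,0,0)) (Dg (0,1,0)) (Dg (0,0,1)) R := by
    rw [← Matrix.ext_iff]
    simp only [LinearMap.toMatrix'_apply, ContinuousLinearMap.coe_coe,
      ContinuousLinearMap.pi_apply]
    simp (config := { decide := true }) [Fin.forall_fin_succ, L', pr, π, stmt15M0,
      Fin.succ_ne_zero, Fin.succ_inj, ContinuousLinearMap.sub_apply,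
      ContinuousLinearMap.neg_apply, Prod.ext_iff, Prod.mk_zero_zero]
  rw [hL.fderiv, hM, stmt15_rank_M0]
  exact ⟨rfl, by norm_num⟩
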